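/- If there exist vertices v_i ∈ V_i for i ∈ {1,…,ℓ} such that v_i v_j ∈ E(H) for every edge ij ∈ E(P), then, setting s_{ij} = w(v_i v_j) for each ij ∈ E(P) and Σ = {s_{ij} : ij ∈ E(P)}, one has cell_G(s_{ij},Σ) = U_{ij} for every ij ∈ E(P). -/

import Mathlib

/-- Vertices of the graph `G(H,P)`: the vertices of `H` together with one vertex `w(e)` for
each edge `e` of `H`. -/
def GHPVert {V : Type*} (H : SimpleGraph V) : Type _ :=
  V ⊕ {e : Sym2 V // e ∈ H.edgeSet}

/-- The base relation generating the edges of `G(H,P)`: each class `Vᵢ = part⁻¹(i)` is a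
clique; `w(e)` is adjacent to both endpoints of `e`; and the subdivision vertices of edges
joining the same pair of classes form a clique. -/
def ghpRel {V : Type*} {ℓ : ℕ} (H : SimpleGraph V) (part : V → Fin ℓ) :
    GHPVert H → GHPVert H → Prop
  | .inl u, .inl v => part u = part v
  | .inl u, .inr e => u ∈ (e : Sym2 V)
  | .inr e, .inl u => u ∈ (e : Sym2 V)
  | .inr e, .inr f => Sym2.map part (e : Sym2 V) = Sym2.map part (f : Sym2 V)

/-- The graph `G(H,P)` (with unit edge-lengths). -/
def ghpGraph {V : Type*} {ℓ : ℕ} (H : SimpleGraph V) (part : V → Fin ℓ) :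
    SimpleGraph (GHPVert H) :=
  SimpleGraph.fromRel (ghpRel H part)

/-- The candidate Voronoi cell `U_{ij} = W_{ij} ∪ Vᵢ ∪ Vⱼ`, for the edge `ε = ij` of `P`. -/
def ghpCellSet {V : Type*} {ℓ : ℕ} (H : SimpleGraph V) (part : V → Fin ℓ)
    (ε : Sym2 (Fin ℓ)) : Set (GHPVert H) :=
  {a | (∃ u : V, a = Sum.inl u ∧ part u ∈ ε) ∨
       (∃ e : {e : Sym2 V // e ∈ H.edgeSet}, a = Sum.inr e ∧ Sym2.map part (e : Sym2 V) = ε)}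

/-- The Voronoi cell of a site `s` among the sites `Σ` in a graph with unit edge-lengths,
using the extended (ℕ∞-valued) shortest-path distance, which is `∞` across components. -/
def graphCell {V : Type*} (G : SimpleGraph V) (Sig : Set V) (s : V) : Set V :=
  {v | ∀ s' ∈ Sig, G.edist s v ≤ G.edist s' v}

open SimpleGraph

lemma le_edist_of_forall_walk {W : Type*} {G : SimpleGraph W} {x y : W} {n : ℕ∞}
    (h : ∀ p : G.Walk x y, n ≤ p.length) : n ≤ G.edist x y := by
  rw [SimpleGraph.edist_eq_sInf]
  exact le_sInf (by rintro _ ⟨p, rfl⟩; exact h p)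

lemma two_le_edist_of {W : Type*} {G : SimpleGraph W} {x y : W}
    (h0 : x ≠ y) (h1 : ¬ G.Adj x y) : 2 ≤ G.edist x y := by
  apply le_edist_of_forall_walk
  intro p
  cases p with
  | nil => exact absurd rfl h0
  | cons ha q =>
    cases q with
    | nil => exact absurd ha h1
    | cons hb r =>
      simp only [SimpleGraph.Walk.length_cons]
      exact_mod_cast by omega

lemma three_le_edist_of {W : Type*} {G : SimpleGraph W} {x y : W}
    (h0 : x ≠ y) (h1 : ¬ G.Adj x y)
    (h2 : ∀ z, G.Adj x z → ¬ G.Adj z y) : 3 ≤ G.edist x y := by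
  apply le_edist_of_forall_walk
  intro p
  cases p with
  | nil => exact absurd rfl h0
  | cons ha q =>
    cases q with
    | nil => exact absurd ha h1
    | cons hb r =>
      cases r with
      | nil => exact absurd hb (h2 _ ha)
      | cons hc s =>
        simp only [SimpleGraph.Walk.length_cons]
        exact_mod_cast by omega

lemma edist_le_two_of {W : Type*} {G : SimpleGraph W} {x y z : W}
    (h1 : G.Adj x z) (h2 : G.Adj z y) : G.edist x y ≤ 2 := by
  have := SimpleGraph.edist_le (SimpleGraph.Walk.cons h1 h2.toWalk)
  simpa using this

section ghp
variable {V : Type*} {ℓ : ℕ} {H : SimpleGraph V} {part : V → Fin ℓ}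

lemma ghp_adj_inl_inl {u w : V} :
    (ghpGraph H part).Adj (Sum.inl u) (Sum.inl w) ↔ u ≠ w ∧ part u = part w := by
  simp only [ghpGraph, SimpleGraph.fromRel_adj, ghpRel]
  constructor
  · rintro ⟨h, h' | h'⟩
    · exact ⟨fun he => h (by rw [he]), h'⟩
    · exact ⟨fun he => h (by rw [he]), h'.symm⟩
  · rintro ⟨h, h'⟩
    exact ⟨fun he => h (Sum.inl.inj he), Or.inl h'⟩

lemma ghp_adj_inl_inr {u : V} {e : {e : Sym2 V // e ∈ H.edgeSet}} :
    (ghpGraph H part).Adj (Sum.inl u) (Sum.inr e) ↔ u ∈ (e : Sym2 V) := by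
  simp only [ghpGraph, SimpleGraph.fromRel_adj, ghpRel, ne_eq]
  constructor
  · rintro ⟨-, h | h⟩ <;> exact h
  · intro h; exact ⟨fun h' => (by cases h'), Or.inl h⟩

lemma ghp_adj_inr_inl {u : V} {e : {e : Sym2 V // e ∈ H.edgeSet}} :
    (ghpGraph H part).Adj (Sum.inr e) (Sum.inl u) ↔ u ∈ (e : Sym2 V) := by
  exact ⟨fun h => ghp_adj_inl_inr.mp h.symm, fun h => (ghp_adj_inl_inr.mpr h).symm⟩

lemma ghp_adj_inr_inr {e f : {e : Sym2 V // e ∈ H.edgeSet}} :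
    (ghpGraph H part).Adj (Sum.inr e) (Sum.inr f) ↔
      e ≠ f ∧ Sym2.map part (e : Sym2 V) = Sym2.map part (f : Sym2 V) := by
  simp only [ghpGraph, SimpleGraph.fromRel_adj, ghpRel]
  constructor
  · rintro ⟨h, h' | h'⟩ <;> exact ⟨fun he => h (by rw [he]), by rw [h']⟩
  · rintro ⟨h, h'⟩; exact ⟨fun he => h (Sum.inr.inj he), Or.inl h'⟩

end ghp

lemma map_part_mem_P {V : Type*} {ℓ : ℕ} {H : SimpleGraph V} {part : V → Fin ℓ}
    {P : SimpleGraph (Fin ℓ)} (hHP : ∀ u v : V, H.Adj u v → P.Adj (part u) (part v))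
    {f : Sym2 V} (hf : f ∈ H.edgeSet) : Sym2.map part f ∈ P.edgeSet := by
  induction f using Sym2.ind with
  | _ x y => simpa using hHP x y (by simpa using hf)

lemma mem_ghpCellSet_inl {V : Type*} {ℓ : ℕ} {H : SimpleGraph V} {part : V → Fin ℓ}
    {u : V} {δ : Sym2 (Fin ℓ)} :
    (Sum.inl u : GHPVert H) ∈ ghpCellSet H part δ ↔ part u ∈ δ := by
  constructor
  · rintro (⟨u', hu', h⟩ | ⟨e', he', -⟩)
    · cases Sum.inl.inj hu'; exact h
    · exact absurd he' (fun h => by cases h)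
  · intro h; exact Or.inl ⟨u, rfl, h⟩

lemma mem_ghpCellSet_inr {V : Type*} {ℓ : ℕ} {H : SimpleGraph V} {part : V → Fin ℓ}
    {f : {e : Sym2 V // e ∈ H.edgeSet}} {δ : Sym2 (Fin ℓ)} :
    (Sum.inr f : GHPVert H) ∈ ghpCellSet H part δ ↔ Sym2.map part (f : Sym2 V) = δ := by
  constructor
  · rintro (⟨u', hu', -⟩ | ⟨e', he', h⟩)
    · exact absurd hu' (fun h => by cases h)
    · cases Sum.inr.inj he'; exact h
  · intro h; exact Or.inr ⟨f, rfl, h⟩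

/-- If the pattern `P` is isomorphic to a multicolored subgraph of `H` via `v i ∈ Vᵢ`, then
placing the site for each edge `ij ∈ E(P)` on the subdivision vertex `w(vᵢvⱼ)` realizes the
candidate cells `U_{ij}` as the Voronoi diagram of `G(H,P)`. -/
theorem multicolored_subgraph_gives_voronoi
    {V : Type*} [Fintype V] {ℓ : ℕ} (H : SimpleGraph V) (part : V → Fin ℓ)
    (hpartsur : ∀ i, ∃ u, part u = i)
    (P : SimpleGraph (Fin ℓ))
    (hdeg : ∀ i : Fin ℓ, ∃ a b, a ≠ b ∧ P.Adj i a ∧ P.Adj i b)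
    (hHP : ∀ u v : V, H.Adj u v → P.Adj (part u) (part v))
    (v : Fin ℓ → V) (hv1 : ∀ i, part (v i) = i)
    (hv2 : ∀ i j, P.Adj i j → H.Adj (v i) (v j))
    (σ : P.edgeSet → GHPVert H)
    (hσ : ∀ ε : P.edgeSet, ∃ e : {e : Sym2 V // e ∈ H.edgeSet},
      σ ε = Sum.inr e ∧ (e : Sym2 V) = Sym2.map v (ε : Sym2 (Fin ℓ))) :
    ∀ ε : P.edgeSet,
      graphCell (ghpGraph H part) (Set.range σ) (σ ε) =
        ghpCellSet H part (ε : Sym2 (Fin ℓ)) := by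
  intro ε
  set G := ghpGraph H part with hG
  obtain ⟨e, hσε, he⟩ := hσ ε
  have hmape : ∀ δ : Sym2 (Fin ℓ), Sym2.map part (Sym2.map v δ) = δ := by
    intro δ
    rw [Sym2.map_map]
    have : part ∘ v = id := funext hv1
    rw [this, Sym2.map_id, id]
  ext a
  have hcell : a ∈ graphCell G (Set.range σ) (σ ε) ↔
      ∀ ε' : P.edgeSet, G.edist (σ ε) a ≤ G.edist (σ ε') a := by
    constructor
    · intro h ε'; exact h _ ⟨ε', rfl⟩
    · rintro h s' ⟨ε', rfl⟩; exact h ε'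
  rw [hcell]
  cases a with
  | inl u =>
    refine Iff.trans ?_ mem_ghpCellSet_inl.symm
    constructor
    · -- forward: in cell → part u ∈ ε
      intro h
      by_contra hne
      -- distance from σ ε to u is at least 3
      have h3 : 3 ≤ G.edist (σ ε) (Sum.inl u) := by
        rw [hσε]
        apply three_le_edist_of
        · exact fun h => by cases h
        · rw [ghp_adj_inr_inl]
          intro hu
          rw [he] at hu
          obtain ⟨k, hk, hvk⟩ := Sym2.mem_map.mp hu
          exact hne (by rw [← hvk, hv1]; exact hk)
        · intro z hz1 hz2
          cases z with
          | inl x =>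
            rw [ghp_adj_inr_inl] at hz1
            rw [ghp_adj_inl_inl] at hz2
            rw [he] at hz1
            obtain ⟨k, hk, hvk⟩ := Sym2.mem_map.mp hz1
            exact hne (by rw [← hz2.2, ← hvk, hv1]; exact hk)
          | inr f =>
            rw [ghp_adj_inr_inr] at hz1
            rw [ghp_adj_inr_inl] at hz2
            have : part u ∈ Sym2.map part (f : Sym2 V) := Sym2.mem_map.mpr ⟨u, hz2, rfl⟩
            rw [← hz1.2, he, hmape] at this
            exact hne this
      -- there is a site within distance 2 of u
      obtain ⟨k, b, hkb, hk, hb⟩ := hdeg (part u)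
      have hkE : s(part u, k) ∈ P.edgeSet := hk
      set ε' : P.edgeSet := ⟨s(part u, k), hkE⟩ with hε'
      obtain ⟨e', hσε', he'⟩ := hσ ε'
      have hmem : v (part u) ∈ (e' : Sym2 V) := by
        rw [he']
        exact Sym2.mem_map.mpr ⟨part u, by simp [hε'], rfl⟩
      have hadj1 : G.Adj (Sum.inr e') (Sum.inl (v (part u))) := ghp_adj_inr_inl.mpr hmem
      have hub : G.edist (σ ε') (Sum.inl u) ≤ 2 := by
        rw [hσε']
        by_cases hvu : v (part u) = u
        · rw [← hvu]
          exact le_trans (le_of_eq (SimpleGraph.edist_eq_one_iff_adj.mpr hadj1)) (by norm_num)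
        · exact edist_le_two_of hadj1 (ghp_adj_inl_inl.mpr ⟨hvu, hv1 _⟩)
      have : (3 : ℕ∞) ≤ 2 := le_trans h3 (le_trans (h ε') hub)
      norm_num at this
    · -- backward: part u ∈ ε → in cell
      intro hu ε'
      obtain ⟨e', hσε', he'⟩ := hσ ε'
      rw [hσε, hσε']
      by_cases hue : u ∈ (e : Sym2 V)
      · rw [SimpleGraph.edist_eq_one_iff_adj.mpr (ghp_adj_inr_inl.mpr hue)]
        refine ENat.one_le_iff_ne_zero.mpr (fun hz => ?_)
        exact by cases (SimpleGraph.edist_eq_zero_iff.mp hz)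
      · have hmem : v (part u) ∈ (e : Sym2 V) := by
          rw [he]; exact Sym2.mem_map.mpr ⟨part u, hu, rfl⟩
        have hvu : v (part u) ≠ u := fun h => hue (h ▸ hmem)
        have hle : G.edist (Sum.inr e) (Sum.inl u) ≤ 2 :=
          edist_le_two_of (ghp_adj_inr_inl.mpr hmem) (ghp_adj_inl_inl.mpr ⟨hvu, hv1 _⟩)
        refine le_trans hle (two_le_edist_of (fun h => by cases h) ?_)
        rw [ghp_adj_inr_inl]
        intro had
        rw [he'] at had
        obtain ⟨k, hk, hvk⟩ := Sym2.mem_map.mp had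
        have hpu : part u = k := by rw [← hvk, hv1]
        exact hue (by rw [he]; exact Sym2.mem_map.mpr ⟨part u, hpu ▸ hu, by rw [hpu, hvk]⟩)
  | inr f =>
    refine Iff.trans ?_ mem_ghpCellSet_inr.symm
    constructor
    · intro h
      by_contra hne
      have hfP : Sym2.map part (f : Sym2 V) ∈ P.edgeSet := map_part_mem_P hHP f.prop
      set ε' : P.edgeSet := ⟨_, hfP⟩ with hε'
      obtain ⟨e', hσε', he'⟩ := hσ ε'
      have hub : G.edist (σ ε') (Sum.inr f) ≤ 1 := by
        rw [hσε']
        by_cases hef : e' = f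
        · rw [hef]; exact (le_of_eq SimpleGraph.edist_self).trans (zero_le)
        · exact le_of_eq (SimpleGraph.edist_eq_one_iff_adj.mpr
            (ghp_adj_inr_inr.mpr ⟨hef, by rw [he', hmape]⟩))
      have hge : 2 ≤ G.edist (σ ε) (Sum.inr f) := by
        rw [hσε]
        apply two_le_edist_of
        · intro hh
          exact hne (by rw [← Sum.inr.inj hh, he, hmape])
        · rw [ghp_adj_inr_inr]
          rintro ⟨-, hmm⟩
          exact hne (by rw [← hmm, he, hmape])
      have : (2 : ℕ∞) ≤ 1 := le_trans hge (le_trans (h ε') hub)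
      norm_num at this
    · intro hf ε'
      obtain ⟨e', hσε', he'⟩ := hσ ε'
      rw [hσε, hσε']
      by_cases hef : e = f
      · rw [hef]; exact (le_of_eq SimpleGraph.edist_self).trans (zero_le)
      · have hadj : G.Adj (Sum.inr e) (Sum.inr f) :=
          ghp_adj_inr_inr.mpr ⟨hef, by rw [he, hmape, hf]⟩
        rw [SimpleGraph.edist_eq_one_iff_adj.mpr hadj]
        by_cases h' : e' = f
        · exfalso
          have hεε : (ε' : Sym2 (Fin ℓ)) = (ε : Sym2 (Fin ℓ)) := by
            rw [← hf, ← h', he', hmape]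
          have : ε' = ε := Subtype.ext hεε
          apply hef
          apply Subtype.ext
          rw [he, ← hεε, ← he', h']
        · refine ENat.one_le_iff_ne_zero.mpr (fun hz => ?_)
          exact h' (Sum.inr.inj (SimpleGraph.edist_eq_zero_iff.mp hz))
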